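/- Define on ℝ⁷ (with coordinates X = (ξ₁, ξ₂, θ, φ, x, y, z)) the smooth vector fields F₁⁰(X) = (1, 0, 0, 0, (1/3)cos φ sin θ, (1/3)sin φ sin θ, (1/3)cos θ) and F₂⁰(X) = (0, 1, 0, 0, −(1/3)cos φ sin θ, −(1/3)sin φ sin θ, −(1/3)cos θ). Then the Lie bracket [F₁⁰, F₂⁰](X) := DF₂⁰(X)·F₁⁰(X) − DF₁⁰(X)·F₂⁰(X) vanishes for every X ∈ ℝ⁷. Consequently, every iterated Lie bracket of F₁⁰ and F₂⁰ involving at least one bracket (for instance [F₁⁰,[F₁⁰,F₂⁰]], [F₂⁰,[F₁⁰,F₂⁰]], [F₁⁰,[F₁⁰,[F₁⁰,F₂⁰]]], [F₂⁰,[F₂⁰,[F₁⁰,F₂⁰]]]) vanishes identically. -/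

import Mathlib

/-- Lie bracket of vector fields on ℝ⁷: `[F, G](X) = DG(X)·F(X) − DF(X)·G(X)`. -/
noncomputable def lieBracket (F G : (Fin 7 → ℝ) → (Fin 7 → ℝ)) :
    (Fin 7 → ℝ) → (Fin 7 → ℝ) :=
  fun X => fderiv ℝ G X (F X) - fderiv ℝ F X (G X)

/-- The leading-order control field
`F₁⁰(X) = (1, 0, 0, 0, (1/3)cos φ sin θ, (1/3)sin φ sin θ, (1/3)cos θ)`,
with coordinates `X = (ξ₁, ξ₂, θ, φ, x, y, z)` (so `θ = X 2`, `φ = X 3`). -/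
noncomputable def F10 (X : Fin 7 → ℝ) : Fin 7 → ℝ :=
  ![1, 0, 0, 0,
    (1 / 3) * Real.cos (X 3) * Real.sin (X 2),
    (1 / 3) * Real.sin (X 3) * Real.sin (X 2),
    (1 / 3) * Real.cos (X 2)]

/-- The leading-order control field
`F₂⁰(X) = (0, 1, 0, 0, −(1/3)cos φ sin θ, −(1/3)sin φ sin θ, −(1/3)cos θ)`. -/
noncomputable def F20 (X : Fin 7 → ℝ) : Fin 7 → ℝ :=
  ![0, 1, 0, 0,
    -((1 / 3) * Real.cos (X 3) * Real.sin (X 2)),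
    -((1 / 3) * Real.sin (X 3) * Real.sin (X 2)),
    -((1 / 3) * Real.cos (X 2))]

noncomputable def Pr : (Fin 7 → ℝ) →L[ℝ] ℝ × ℝ :=
  (ContinuousLinearMap.proj 2).prod (ContinuousLinearMap.proj 3)

noncomputable def H1 (p : ℝ × ℝ) : Fin 7 → ℝ :=
  ![1, 0, 0, 0,
    (1 / 3) * Real.cos p.2 * Real.sin p.1,
    (1 / 3) * Real.sin p.2 * Real.sin p.1,
    (1 / 3) * Real.cos p.1]

noncomputable def H2 (p : ℝ × ℝ) : Fin 7 → ℝ :=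
  ![0, 1, 0, 0,
    -((1 / 3) * Real.cos p.2 * Real.sin p.1),
    -((1 / 3) * Real.sin p.2 * Real.sin p.1),
    -((1 / 3) * Real.cos p.1)]

lemma hH1 : Differentiable ℝ H1 := by
  apply differentiable_pi.mpr
  intro i
  fin_cases i
  · exact (by fun_prop : Differentiable ℝ fun _ : ℝ × ℝ => (1 : ℝ))
  · exact (by fun_prop : Differentiable ℝ fun _ : ℝ × ℝ => (0 : ℝ))
  · exact (by fun_prop : Differentiable ℝ fun _ : ℝ × ℝ => (0 : ℝ))
  · exact (by fun_prop : Differentiable ℝ fun _ : ℝ × ℝ => (0 : ℝ))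
  · exact (by fun_prop : Differentiable ℝ fun p : ℝ × ℝ => (1 / 3) * Real.cos p.2 * Real.sin p.1)
  · exact (by fun_prop : Differentiable ℝ fun p : ℝ × ℝ => (1 / 3) * Real.sin p.2 * Real.sin p.1)
  · exact (by fun_prop : Differentiable ℝ fun p : ℝ × ℝ => (1 / 3) * Real.cos p.1)

lemma hH2 : Differentiable ℝ H2 := by
  apply differentiable_pi.mpr
  intro i
  fin_cases i
  · exact (by fun_prop : Differentiable ℝ fun _ : ℝ × ℝ => (0 : ℝ))
  · exact (by fun_prop : Differentiable ℝ fun _ : ℝ × ℝ => (1 : ℝ))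
  · exact (by fun_prop : Differentiable ℝ fun _ : ℝ × ℝ => (0 : ℝ))
  · exact (by fun_prop : Differentiable ℝ fun _ : ℝ × ℝ => (0 : ℝ))
  · exact (by fun_prop : Differentiable ℝ fun p : ℝ × ℝ => -((1 / 3) * Real.cos p.2 * Real.sin p.1))
  · exact (by fun_prop : Differentiable ℝ fun p : ℝ × ℝ => -((1 / 3) * Real.sin p.2 * Real.sin p.1))
  · exact (by fun_prop : Differentiable ℝ fun p : ℝ × ℝ => -((1 / 3) * Real.cos p.1))

lemma F10_eq : F10 = H1 ∘ Pr := rfl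
lemma F20_eq : F20 = H2 ∘ Pr := rfl

lemma fderiv_F10_zero (X v : Fin 7 → ℝ) (h2 : v 2 = 0) (h3 : v 3 = 0) :
    fderiv ℝ F10 X v = 0 := by
  rw [F10_eq]
  rw [fderiv_comp X (hH1 (Pr X)) Pr.differentiableAt]
  have : fderiv ℝ (⇑Pr) X = Pr := Pr.fderiv
  rw [this]
  simp only [ContinuousLinearMap.coe_comp', Function.comp_apply]
  have : Pr v = 0 := by
    simp [Pr, ContinuousLinearMap.prod_apply, h2, h3, Prod.ext_iff]
  rw [this, map_zero]

lemma fderiv_F20_zero (X v : Fin 7 → ℝ) (h2 : v 2 = 0) (h3 : v 3 = 0) :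
    fderiv ℝ F20 X v = 0 := by
  rw [F20_eq]
  rw [fderiv_comp X (hH2 (Pr X)) Pr.differentiableAt]
  have : fderiv ℝ (⇑Pr) X = Pr := Pr.fderiv
  rw [this]
  simp only [ContinuousLinearMap.coe_comp', Function.comp_apply]
  have : Pr v = 0 := by
    simp [Pr, ContinuousLinearMap.prod_apply, h2, h3, Prod.ext_iff]
  rw [this, map_zero]

lemma bracket_zero : lieBracket F10 F20 = fun _ => 0 := by
  funext X
  unfold lieBracket
  rw [fderiv_F20_zero X (F10 X) (by simp [F10]) (by simp [F10]),
    fderiv_F10_zero X (F20 X) (by simp [F20]) (by simp [F20])]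
  simp

lemma bracket_with_zero (F : (Fin 7 → ℝ) → (Fin 7 → ℝ)) :
    lieBracket F (fun _ => 0) = fun _ => 0 := by
  funext X
  unfold lieBracket
  rw [fderiv_fun_const]
  simp


/-- The Lie bracket `[F₁⁰, F₂⁰]` vanishes identically, and consequently so does every
iterated bracket involving at least one bracket, for instance `[F₁⁰,[F₁⁰,F₂⁰]]`,
`[F₂⁰,[F₁⁰,F₂⁰]]`, `[F₁⁰,[F₁⁰,[F₁⁰,F₂⁰]]]` and `[F₂⁰,[F₂⁰,[F₁⁰,F₂⁰]]]`. -/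
theorem flat_wall_fields_commute :
    (∀ X : Fin 7 → ℝ, lieBracket F10 F20 X = 0) ∧
    (∀ X : Fin 7 → ℝ, lieBracket F10 (lieBracket F10 F20) X = 0) ∧
    (∀ X : Fin 7 → ℝ, lieBracket F20 (lieBracket F10 F20) X = 0) ∧
    (∀ X : Fin 7 → ℝ, lieBracket F10 (lieBracket F10 (lieBracket F10 F20)) X = 0) ∧
    (∀ X : Fin 7 → ℝ, lieBracket F20 (lieBracket F20 (lieBracket F10 F20)) X = 0) := by
  have h0 := bracket_zero
  have h1 : lieBracket F10 (lieBracket F10 F20) = fun _ => 0 := by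
    rw [h0, bracket_with_zero]
  have h2 : lieBracket F20 (lieBracket F10 F20) = fun _ => 0 := by
    rw [h0, bracket_with_zero]
  have h3 : lieBracket F10 (lieBracket F10 (lieBracket F10 F20)) = fun _ => 0 := by
    rw [h1, bracket_with_zero]
  have h4 : lieBracket F20 (lieBracket F20 (lieBracket F10 F20)) = fun _ => 0 := by
    rw [h2, bracket_with_zero]
  exact ⟨fun X => by rw [h0], fun X => by rw [h1], fun X => by rw [h2],
    fun X => by rw [h3], fun X => by rw [h4]⟩
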